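/- Let a ≤ 0 ≤ i ≤ b be integers, and let μ_j > 0 for a ≤ j ≤ b and p⁺_r > 0, p⁻_r > 0 for a ≤ r ≤ b−1 be real numbers. For an integer k with a ≤ k ≤ b define Z(k) = Σ_{j=k}^{b} μ_j · Π_{r=k}^{j−1} (p⁻_r / p⁺_r) + Σ_{j=a}^{k−1} μ_j · Π_{r=j}^{k−1} (p⁺_r / p⁻_r), with empty products equal to 1. Then Z(i) · Π_{r=0}^{i−1} p⁻_r = Z(0) · Π_{r=0}^{i−1} p⁺_r. -/

import Mathlib

open Finset

private lemma walnuts_step (a b k : ℤ) (μf pp pm : ℤ → ℝ)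
    (hak : a ≤ k) (hkb : k < b) (hppk : pp k ≠ 0) (hpmk : pm k ≠ 0) :
    ((∑ j ∈ Finset.Icc (k+1) b, μf j * ∏ r ∈ Finset.Ico (k+1) j, (pm r / pp r)) +
      ∑ j ∈ Finset.Icc a k, μf j * ∏ r ∈ Finset.Ico j (k+1), (pp r / pm r)) * pm k
    = ((∑ j ∈ Finset.Icc k b, μf j * ∏ r ∈ Finset.Ico k j, (pm r / pp r)) +
      ∑ j ∈ Finset.Icc a (k-1), μf j * ∏ r ∈ Finset.Ico j k, (pp r / pm r)) * pp k := by
  have hIcc1 : Finset.Icc k b = insert k (Finset.Icc (k+1) b) := by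
    ext x; simp [Finset.mem_Icc, Finset.mem_insert]; omega
  have hIcc2 : Finset.Icc a k = insert k (Finset.Icc a (k-1)) := by
    ext x; simp [Finset.mem_Icc, Finset.mem_insert]; omega
  have hk1 : (k : ℤ) ∉ Finset.Icc (k+1) b := by simp
  have hk2 : (k : ℤ) ∉ Finset.Icc a (k-1) := by simp
  -- rewrite the first sum on the RHS
  have h1 : (∑ j ∈ Finset.Icc k b, μf j * ∏ r ∈ Finset.Ico k j, (pm r / pp r))
      = μf k + (pm k / pp k) *
        ∑ j ∈ Finset.Icc (k+1) b, μf j * ∏ r ∈ Finset.Ico (k+1) j, (pm r / pp r) := by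
    rw [hIcc1, Finset.sum_insert hk1, Finset.mul_sum]
    congr 1
    · simp
    · refine Finset.sum_congr rfl ?_
      intro j hj
      have hj' : k + 1 ≤ j := (Finset.mem_Icc.1 hj).1
      have hIco : Finset.Ico k j = insert k (Finset.Ico (k+1) j) := by
        ext x; simp [Finset.mem_Ico, Finset.mem_insert]; omega
      have hkni : (k : ℤ) ∉ Finset.Ico (k+1) j := by simp
      rw [hIco, Finset.prod_insert hkni]; ring
  -- rewrite the second sum on the LHS
  have h2 : (∑ j ∈ Finset.Icc a k, μf j * ∏ r ∈ Finset.Ico j (k+1), (pp r / pm r))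
      = μf k * (pp k / pm k) + (pp k / pm k) *
        ∑ j ∈ Finset.Icc a (k-1), μf j * ∏ r ∈ Finset.Ico j k, (pp r / pm r) := by
    rw [hIcc2, Finset.sum_insert hk2, Finset.mul_sum]
    congr 1
    · have : Finset.Ico k (k+1) = {k} := by
        ext x; simp [Finset.mem_Ico]; omega
      rw [this]; simp
    · refine Finset.sum_congr rfl ?_
      intro j hj
      have hj' : j ≤ k - 1 := (Finset.mem_Icc.1 hj).2
      have hIco : Finset.Ico j (k+1) = insert k (Finset.Ico j k) := by
        ext x; simp [Finset.mem_Ico, Finset.mem_insert]; omega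
      have hkni : (k : ℤ) ∉ Finset.Ico j k := by simp
      rw [hIco, Finset.prod_insert hkni]; ring
  rw [h1, h2]
  field_simp
  ring

/-- The key normalizing-constant identity for WALNUTS with multinomial index selection
(equation (4.8) of the paper): with
`Z(k) = Σ_{j=k}^{b} μ_j Π_{r=k}^{j-1} (p⁻_r/p⁺_r) + Σ_{j=a}^{k-1} μ_j Π_{r=j}^{k-1} (p⁺_r/p⁻_r)`,
one has `Z(i) · Π_{r=0}^{i-1} p⁻_r = Z(0) · Π_{r=0}^{i-1} p⁺_r`. -/
theorem walnuts_normalizing_constant_identity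
    (a b i : ℤ) (ha : a ≤ 0) (h0i : 0 ≤ i) (hib : i ≤ b)
    (μf pp pm : ℤ → ℝ)
    (hμ : ∀ j, a ≤ j → j ≤ b → 0 < μf j)
    (hpp : ∀ r, a ≤ r → r ≤ b - 1 → 0 < pp r)
    (hpm : ∀ r, a ≤ r → r ≤ b - 1 → 0 < pm r) :
    (let Z : ℤ → ℝ := fun k =>
      (∑ j ∈ Finset.Icc k b, μf j * ∏ r ∈ Finset.Ico k j, (pm r / pp r)) +
      ∑ j ∈ Finset.Icc a (k - 1), μf j * ∏ r ∈ Finset.Ico j k, (pp r / pm r)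
    Z i * ∏ r ∈ Finset.Ico (0 : ℤ) i, pm r = Z 0 * ∏ r ∈ Finset.Ico (0 : ℤ) i, pp r) := by
  intro Z
  refine Int.le_induction (m := 0) (motive := fun i _ => i ≤ b →
      Z i * ∏ r ∈ Finset.Ico (0 : ℤ) i, pm r = Z 0 * ∏ r ∈ Finset.Ico (0 : ℤ) i, pp r)
    ?_ ?_ i h0i hib
  · intro _; simp
  · intro n hn IH hib
    have hnb : n ≤ b - 1 := by omega
    have hnb' : n ≤ b := by omega
    have IH' := IH hnb'
    have hstep : Z (n + 1) * pm n = Z n * pp n := by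
      have := walnuts_step a b n μf pp pm (by omega) (by omega)
        (ne_of_gt (hpp n (by omega) hnb)) (ne_of_gt (hpm n (by omega) hnb))
      simpa [Z] using this
    have hIco : Finset.Ico (0:ℤ) (n+1) = insert n (Finset.Ico (0:ℤ) n) := by
      ext x; simp [Finset.mem_Ico, Finset.mem_insert]; omega
    have hnni : (n : ℤ) ∉ Finset.Ico (0:ℤ) n := by simp
    rw [hIco, Finset.prod_insert hnni, Finset.prod_insert hnni]
    calc Z (n+1) * (pm n * ∏ r ∈ Finset.Ico (0:ℤ) n, pm r)
        = (Z (n+1) * pm n) * ∏ r ∈ Finset.Ico (0:ℤ) n, pm r := by ring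
      _ = (Z n * ∏ r ∈ Finset.Ico (0:ℤ) n, pm r) * pp n := by rw [hstep]; ring
      _ = (Z 0 * ∏ r ∈ Finset.Ico (0:ℤ) n, pp r) * pp n := by rw [IH']
      _ = Z 0 * (pp n * ∏ r ∈ Finset.Ico (0:ℤ) n, pp r) := by ring
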